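/- Let f ∈ ℂ[x] be a polynomial of degree d ≥ 1. If there are more than 2d distinct points α on the unit circle such that |f(α)| = 1, then f(x) = ξ·x^d for some ξ ∈ ℂ with |ξ| = 1. -/

import Mathlib

open Polynomial

theorem stmt_12 (d : ℕ) (hd : 1 ≤ d) (f : ℂ[X]) (hfd : f.natDegree = d)
    (S : Finset ℂ) (hcard : 2 * d < S.card)
    (hS : ∀ α ∈ S, ‖α‖ = 1 ∧ ‖f.eval α‖ = 1) :
    ∃ ξ : ℂ, ‖ξ‖ = 1 ∧ f = C ξ * X ^ d := by
  classical
  set conj := starRingEnd ℂ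
  -- the "reversed conjugate" polynomial
  set g : ℂ[X] := ∑ j ∈ Finset.range (d + 1), C (conj (f.coeff (d - j))) * X ^ j with hg
  have hgdeg : g.natDegree ≤ d := by
    apply Polynomial.natDegree_sum_le_of_forall_le
    intro j hj
    calc (C (conj (f.coeff (d - j))) * X ^ j).natDegree ≤ (X ^ j : ℂ[X]).natDegree :=
          natDegree_C_mul_le _ _
      _ ≤ d := by
          rw [natDegree_X_pow]
          exact Nat.lt_succ_iff.mp (Finset.mem_range.mp hj)
  -- key evaluation identity on S
  have hkey : ∀ α ∈ S, f.eval α * g.eval α = α ^ d := by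
    intro α hα
    obtain ⟨hα1, hfα1⟩ := hS α hα
    have hα0 : α ≠ 0 := by
      intro h; rw [h] at hα1; simp at hα1
    have hconjα : conj α = α⁻¹ := by
      have : α * conj α = 1 := by
        rw [Complex.mul_conj]
        norm_cast
        rw [← Complex.sq_norm, hα1]; norm_num
      field_simp at this ⊢
      linear_combination this
    have hgα : g.eval α = α ^ d * conj (f.eval α) := by
      have hfeval : f.eval α = ∑ i ∈ Finset.range (d + 1), f.coeff i * α ^ i :=
        Polynomial.eval_eq_sum_range' (by omega) α
      rw [hfeval, map_sum, Finset.mul_sum, hg, Polynomial.eval_finset_sum,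
        ← Finset.sum_range_reflect]
      apply Finset.sum_congr rfl
      intro i hi
      have hi' : i ≤ d := Nat.lt_succ_iff.mp (Finset.mem_range.mp hi)
      simp only [eval_mul, eval_C, eval_pow, eval_X]
      have h1 : d + 1 - 1 - i = d - i := by omega
      rw [h1, Nat.sub_sub_self hi']
      rw [map_mul, map_pow, hconjα]
      have : α ^ d * (conj (f.coeff i) * (α⁻¹) ^ i)
          = conj (f.coeff i) * (α ^ d * (α⁻¹) ^ i) := by ring
      rw [this]
      congr 1
      rw [← Nat.sub_add_cancel hi', pow_add]
      field_simp
      rw [Nat.add_sub_cancel, one_div, inv_pow, mul_assoc, mul_inv_cancel₀ (pow_ne_zero _ hα0), mul_one]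
    rw [hgα]
    have hnorm : f.eval α * conj (f.eval α) = 1 := by
      rw [Complex.mul_conj]
      norm_cast
      rw [← Complex.sq_norm, hfα1]; norm_num
    calc f.eval α * (α ^ d * conj (f.eval α))
        = (f.eval α * conj (f.eval α)) * α ^ d := by ring
      _ = α ^ d := by rw [hnorm, one_mul]
  -- the polynomial f*g - X^d vanishes on S and has low degree, hence is zero
  have hPzero : f * g - X ^ d = 0 := by
    apply Polynomial.eq_zero_of_natDegree_lt_card_of_eval_eq_zero' _ S
    · intro α hα
      simp only [eval_sub, eval_mul, eval_pow, eval_X]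
      rw [hkey α hα]; ring
    · calc (f * g - X ^ d).natDegree
          ≤ max (f * g).natDegree (X ^ d : ℂ[X]).natDegree := natDegree_sub_le _ _
        _ ≤ 2 * d := by
            apply max_le
            · calc (f * g).natDegree ≤ f.natDegree + g.natDegree := natDegree_mul_le
                _ ≤ 2 * d := by omega
            · rw [natDegree_X_pow]; omega
        _ < S.card := hcard
  have hfg : f * g = X ^ d := by linear_combination hPzero
  have hf0 : f ≠ 0 := by
    intro h
    rw [h, natDegree_zero] at hfd
    omega
  -- all roots of f are zero
  have hroots0 : ∀ r ∈ f.roots, r = 0 := by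
    intro r hr
    have hfr : f.eval r = 0 := (Polynomial.isRoot_of_mem_roots hr)
    have : r ^ d = 0 := by
      have := congrArg (Polynomial.eval r) hfg
      simp only [eval_mul, eval_pow, eval_X] at this
      rw [hfr, zero_mul] at this
      exact this.symm
    exact pow_eq_zero_iff (by omega) |>.mp this
  have hsplits : f.Splits := IsAlgClosed.splits f
  have hcardroots : f.roots.card = f.natDegree :=
    (Polynomial.splits_iff_card_roots).mp hsplits
  have hprod := Polynomial.C_leadingCoeff_mul_prod_multiset_X_sub_C (p := f) hcardroots
  have hmap : (f.roots.map fun r => X - C r).prod = X ^ d := by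
    have : f.roots.map (fun r => X - C r) = f.roots.map (fun _ => (X : ℂ[X])) := by
      apply Multiset.map_congr rfl
      intro r hr
      rw [hroots0 r hr]
      simp
    rw [this, Multiset.map_const', Multiset.prod_replicate, hcardroots, hfd]
  refine ⟨f.leadingCoeff, ?_, ?_⟩
  · -- |leadingCoeff| = 1 using a point of S
    have hne : S.Nonempty := Finset.card_pos.mp (by omega)
    obtain ⟨α, hα⟩ := hne
    obtain ⟨hα1, hfα1⟩ := hS α hα
    have hfform : f = C f.leadingCoeff * X ^ d := by
      conv_lhs => rw [← hprod]
      rw [hmap]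
    have : ‖f.eval α‖ = ‖f.leadingCoeff‖ * ‖α‖ ^ d := by
      rw [hfform]; simp [map_mul, map_pow]
    rw [hfα1, hα1, one_pow, mul_one] at this
    exact this.symm
  · conv_lhs => rw [← hprod]
    rw [hmap]
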